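/- Let λ be an infinite cardinal and let Y ⊆ λ* be a set of cardinality less than the cofinality of λ. Then there exists an ordinal ε < λ such that the ε-neighborhoods [η]_ε, for η ∈ Y, are pairwise disjoint. -/

import Mathlib

open Cardinal Topology

/-- For a cardinal `λ`, `λ*` is the set of finite sequences of elements of `λ`
(ordinals less than `λ`), represented as lists over the canonical type of order
type `λ` (i.e. `l.ord.ToType`, whose elements correspond to the ordinals `< λ`). -/
abbrev LambdaStar (l : Cardinal) : Type _ := List l.ord.ToType

/-- The `ε`-neighborhood `[η]_ε = {η} ∪ {ρ ∈ λ* : η ⊂ ρ and ρ(|η|) ≥ ε}` of `η ∈ λ*`,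
where `η ⊂ ρ` means that `η` is a proper initial segment of `ρ`, and `|η|` is the
length of `η`. The parameter `ε` ranges over `l.ord.ToType`, i.e. over the ordinals `< λ`. -/
def epsNbhd (l : Cardinal) (η : LambdaStar l) (ε : l.ord.ToType) : Set (LambdaStar l) :=
  {η} ∪ {ρ : LambdaStar l |
    List.IsPrefix η ρ ∧ ∃ h : η.length < ρ.length, ε ≤ ρ.get ⟨η.length, h⟩}

/-- The topology on `λ*` generated by the subbase consisting of the `ε`-neighborhoods
`[η]_ε` for `η ∈ λ*` and `ε < λ`. -/
def lambdaStarTopology (l : Cardinal) : TopologicalSpace (LambdaStar l) :=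
  TopologicalSpace.generateFrom
    {s : Set (LambdaStar l) | ∃ (η : LambdaStar l) (ε : l.ord.ToType), s = epsNbhd l η ε}

private theorem le_foldr_max_of_mem {L : List Ordinal} {a : Ordinal} (h : a ∈ L) :
    a ≤ L.foldr max 0 := by
  induction L with
  | nil => simp at h
  | cons b t ih =>
    rcases List.mem_cons.1 h with rfl | h
    · exact le_max_left _ _
    · exact (ih h).trans (le_max_right _ _)

private theorem foldr_max_lt {o : Ordinal} (ho : 0 < o) {L : List Ordinal}
    (h : ∀ a ∈ L, a < o) : L.foldr max 0 < o := by
  induction L with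
  | nil => simpa
  | cons b t ih =>
    exact max_lt (h b List.mem_cons_self) (ih fun a ha => h a (List.mem_cons_of_mem _ ha))

/-- Let `λ` be an infinite cardinal and let `Y ⊆ λ*` have cardinality less than the
cofinality of `λ`. Then there exists `ε < λ` such that the `ε`-neighborhoods `[η]_ε`,
for `η ∈ Y`, are pairwise disjoint. -/
theorem stmt8 (l : Cardinal) (hl : ℵ₀ ≤ l) (Y : Set (LambdaStar l))
    (hY : #Y < l.ord.cof) :
    ∃ ε : l.ord.ToType, ∀ η ∈ Y, ∀ ν ∈ Y, η ≠ ν →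
      Disjoint (epsNbhd l η ε) (epsNbhd l ν ε) := by
  have hlim : Order.IsSuccLimit l.ord := Cardinal.isSuccLimit_ord hl
  let ot : l.ord.ToType → Ordinal := fun x => @Ordinal.typein l.ord.ToType (· < ·) isWellOrder_lt x
  have hot_lt : ∀ x, ot x < l.ord := fun x => Ordinal.typein_lt_self x
  have hot_iff : ∀ x y : l.ord.ToType, ot x < ot y ↔ x < y := fun x y =>
    @Ordinal.typein_lt_typein l.ord.ToType (· < ·) isWellOrder_lt x y
  -- For each η ∈ Y, a strict bound on the entries
  set F : Y → Ordinal := fun η => Order.succ ((η.1.map ot).foldr max 0) with hF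
  have hFlt : ∀ η : Y, F η < l.ord := by
    intro η
    apply hlim.succ_lt
    exact foldr_max_lt hlim.pos (by
      intro a ha
      rcases List.mem_map.1 ha with ⟨x, _, rfl⟩
      exact hot_lt x)
  have hsup : ⨆ i, F i < l.ord := Ordinal.iSup_lt_of_lt_cof hY hFlt
  set ε : l.ord.ToType := Ordinal.ToType.mk (o := l.ord) ⟨⨆ i, F i, hsup⟩ with hε
  have hotε : ot ε = ⨆ i, F i := by
    have := (Ordinal.ToType.mk (o := l.ord)).symm_apply_apply ⟨⨆ i, F i, hsup⟩
    exact congrArg Subtype.val this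
  -- every entry of every η ∈ Y is < ε
  have hkey : ∀ η ∈ Y, ∀ (i : ℕ) (hi : i < η.length), η.get ⟨i, hi⟩ < ε := by
    intro η hη i hi
    rw [← hot_iff, hotε]
    have h1 : ot (η.get ⟨i, hi⟩) ≤ (η.map ot).foldr max 0 :=
      le_foldr_max_of_mem (List.mem_map.2 ⟨_, η.get_mem ⟨i, hi⟩, rfl⟩)
    calc ot (η.get ⟨i, hi⟩) < F ⟨η, hη⟩ := (Order.lt_succ _).trans_le' h1
      _ ≤ ⨆ i, F i := le_ciSup (Ordinal.bddAbove_range F) ⟨η, hη⟩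
  refine ⟨ε, ?_⟩
  -- main combinatorial lemma
  have main : ∀ η ∈ Y, ∀ ν ∈ Y, η ≠ ν → η.length ≤ ν.length →
      ∀ ρ, ρ ∈ epsNbhd l η ε → ρ ∉ epsNbhd l ν ε := by
    intro η hη ν hν hne hlen ρ hρη hρν
    rcases hρη with rfl | ⟨hpre₁, h₁, hge₁⟩
    · -- ρ = η
      rcases hρν with rfl | ⟨hpre₂, h₂, hge₂⟩
      · exact hne rfl
      · exact absurd hge₂ (not_le.2 (hkey _ hη _ _))
    · rcases hρν with rfl | ⟨hpre₂, h₂, hge₂⟩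
      · exact absurd hge₁ (not_le.2 (hkey _ hν _ _))
      · -- both proper extensions
        have hpre : η <+: ν := List.prefix_of_prefix_length_le hpre₁ hpre₂ hlen
        have hlt : η.length < ν.length := by
          rcases lt_or_eq_of_le hlen with h | h
          · exact h
          · exact absurd (hpre.eq_of_length h) hne
        have : ρ.get ⟨η.length, h₁⟩ = ν.get ⟨η.length, hlt⟩ := by
          simp only [List.get_eq_getElem]
          exact (hpre₂.getElem hlt).symm
        rw [this] at hge₁
        exact absurd hge₁ (not_le.2 (hkey _ hν _ _))
  intro η hη ν hν hne
  rcases le_total η.length ν.length with h | h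
  · exact Set.disjoint_left.2 (main η hη ν hν hne h)
  · exact Set.disjoint_right.2 (main ν hν η hη (Ne.symm hne) h)
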